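/- arXiv:1706.03383 — 2 statements merged into one kernel-verified Lean document; each statement's English description precedes it below -/
import Mathlib

section
/- For any prime power q, any real 0 ≤ δ < 1 - 1/q, any real 0 ≤ ρ < 1 - H_q(δ), and all sufficiently large n, a uniformly random linear code C : F_q^{⌊ρn⌋} → F_q^n (given by a uniformly random n × ⌊ρn⌋ generating matrix) has relative distance at least δ with probability at least 1 - 2^{-Ω(n)}. -/
open Finset Real

/-- The `q`-ary entropy function. -/
noncomputable def qEntropy (q : ℕ) (x : ℝ) : ℝ :=
  x * Real.logb q (q - 1) + x * Real.logb q (1 / x) + (1 - x) * Real.logb q (1 / (1 - x))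

lemma qEntropy_rpow (q : ℕ) (hq : 2 ≤ q) (δ : ℝ) (hδ0 : 0 < δ) (hδ1 : δ < 1) (n : ℕ) :
    (q : ℝ) ^ (-(qEntropy q δ * n)) =
      (δ / ((q : ℝ) - 1)) ^ (δ * n) * (1 - δ) ^ ((1 - δ) * n) := by
  have hq1 : (1 : ℝ) < (q : ℝ) := by exact_mod_cast lt_of_lt_of_le one_lt_two hq
  have hq0 : (0 : ℝ) < q := lt_trans one_pos hq1
  have hqne : (q : ℝ) ≠ 1 := ne_of_gt hq1
  have hq1' : (0 : ℝ) < (q : ℝ) - 1 := by linarith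
  have h1δ : (0 : ℝ) < 1 - δ := by linarith
  have hr : (0 : ℝ) < δ / ((q : ℝ) - 1) := div_pos hδ0 hq1'
  have key : -(qEntropy q δ * n) =
      Real.logb q (δ / ((q : ℝ) - 1)) * (δ * n) + Real.logb q (1 - δ) * ((1 - δ) * n) := by
    have e1 : Real.logb q (δ / ((q : ℝ) - 1)) = Real.logb q δ - Real.logb q ((q : ℝ) - 1) :=
      Real.logb_div (ne_of_gt hδ0) (ne_of_gt hq1')
    have e2 : Real.logb q (1 / δ) = - Real.logb q δ := by
      rw [one_div, Real.logb_inv]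
    have e3 : Real.logb q (1 / (1 - δ)) = - Real.logb q (1 - δ) := by
      rw [one_div, Real.logb_inv]
    unfold qEntropy
    rw [e1, e2, e3]
    ring
  rw [key, Real.rpow_add hq0, Real.rpow_mul hq0.le, Real.rpow_mul hq0.le,
    Real.rpow_logb hq0 hqne hr, Real.rpow_logb hq0 hqne h1δ]

lemma ball_bound (F : Type*) [Field F] [Fintype F] [DecidableEq F] (q : ℕ)
    (hq : Fintype.card F = q) (δ : ℝ) (hδ0 : 0 ≤ δ) (hδ : δ < 1 - 1 / q) (n : ℕ) :
    (((univ : Finset (Fin n → F)).filter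
        (fun y => ((hammingNorm y : ℝ)) / n < δ)).card : ℝ)
      ≤ (q : ℝ) ^ (qEntropy q δ * n) := by
  classical
  have hq2 : 2 ≤ q := by
    rw [← hq]; exact Fintype.one_lt_card
  have hq1 : (1 : ℝ) < (q : ℝ) := by exact_mod_cast lt_of_lt_of_le one_lt_two hq2
  have hq0 : (0 : ℝ) < q := lt_trans one_pos hq1
  have hq1' : (0 : ℝ) < (q : ℝ) - 1 := by linarith
  rcases eq_or_lt_of_le hδ0 with h0 | hδpos
  · -- δ = 0 : the set is empty
    have : (univ : Finset (Fin n → F)).filter (fun y => ((hammingNorm y : ℝ)) / n < δ) = ∅ := by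
      rw [Finset.filter_eq_empty_iff]
      intro y _
      rw [← h0]
      push_neg
      positivity
    rw [this]
    simp only [Finset.card_empty, Nat.cast_zero]
    positivity
  · have hδ1 : δ < 1 := by
      have : (0:ℝ) < 1 / q := by positivity
      linarith
    have h1δ : (0 : ℝ) < 1 - δ := by linarith
    -- weight function
    set a : ℝ := δ / ((q : ℝ) - 1) with ha
    have ha0 : 0 < a := div_pos hδpos hq1'
    set f : F → ℝ := fun x => if x = 0 then (1 - δ) else a with hf
    have hf0 : ∀ x, 0 ≤ f x := by
      intro x; simp only [hf]; split <;> positivity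
    -- total sum is 1
    have hcard0 : ((univ : Finset F).filter (fun x => x = 0)).card = 1 := by
      rw [Finset.filter_eq']
      simp
    have hcardne : ((univ : Finset F).filter (fun x => ¬ x = 0)).card = q - 1 := by
      have := Finset.card_filter_add_card_filter_not (s := (univ : Finset F))
        (p := fun x => x = 0)
      rw [hcard0, Finset.card_univ, hq] at this
      omega
    have hqcast : ((q - 1 : ℕ) : ℝ) = (q : ℝ) - 1 := by
      have : 1 ≤ q := by omega
      push_cast [this]
      ring
    have hsumf : ∑ x : F, f x = 1 := by
      rw [hf, Finset.sum_ite, Finset.sum_const, Finset.sum_const, hcard0, hcardne]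
      rw [nsmul_eq_mul, nsmul_eq_mul, hqcast, ha]
      field_simp
      push_cast; ring
    -- product over coordinates
    have hprod : ∀ y : Fin n → F, ∏ i, f (y i)
        = (1 - δ) ^ (n - hammingNorm y) * a ^ (hammingNorm y) := by
      intro y
      have hwt : hammingNorm y = ((univ : Finset (Fin n)).filter (fun i => ¬ y i = 0)).card := by
        rfl
      have hc0 : ((univ : Finset (Fin n)).filter (fun i => y i = 0)).card
          = n - hammingNorm y := by
        have := Finset.card_filter_add_card_filter_not (s := (univ : Finset (Fin n)))
          (p := fun i => y i = 0)
        rw [Finset.card_univ, Fintype.card_fin] at this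
        omega
      rw [hf]
      rw [Finset.prod_ite (fun _ => 1 - δ) (fun _ => a), Finset.prod_const, Finset.prod_const,
        hc0, ← hwt]
    -- r = a / (1 - δ) ≤ 1
    set r : ℝ := a / (1 - δ) with hr
    have hr0 : 0 < r := div_pos ha0 h1δ
    have hr1 : r ≤ 1 := by
      rw [hr, div_le_one h1δ, ha, div_le_iff₀ hq1']
      have heq : (1 - 1/(q:ℝ)) * q = (q:ℝ) - 1 := by field_simp
      nlinarith [mul_le_mul_of_nonneg_right hδ.le hq0.le, heq]
    have har : a = r * (1 - δ) := by
      rw [hr]; field_simp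
    -- pointwise bound
    have hpt : ∀ y : Fin n → F, ((hammingNorm y : ℝ)) / n < δ →
        (q : ℝ) ^ (-(qEntropy q δ * n)) ≤ ∏ i, f (y i) := by
      intro y hy
      have hwtn : hammingNorm y ≤ n := by
        rw [show hammingNorm y = ((univ : Finset (Fin n)).filter (fun i => ¬ y i = 0)).card from rfl]
        exact (Finset.card_filter_le _ _).trans (by simp)
      have hwtδ : (hammingNorm y : ℝ) ≤ δ * n := by
        rcases Nat.eq_zero_or_pos n with h | h
        · subst h
          have : hammingNorm y = 0 := Nat.le_zero.mp ((Finset.card_filter_le _ _).trans (by simp))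
          simp [this]
        · have hn0 : (0:ℝ) < n := by exact_mod_cast h
          rw [div_lt_iff₀ hn0] at hy
          linarith
      rw [hprod y, qEntropy_rpow q hq2 δ hδpos hδ1 n]
      -- convert nat powers to rpow
      have e1 : ((1 - δ) ^ (n - hammingNorm y) : ℝ)
          = (1 - δ) ^ (((n : ℝ) - hammingNorm y)) := by
        rw [← Real.rpow_natCast (1 - δ) (n - hammingNorm y), Nat.cast_sub hwtn]
      have e2 : (a ^ hammingNorm y : ℝ) = a ^ ((hammingNorm y : ℝ)) := by
        rw [Real.rpow_natCast]
      rw [e1, e2]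
      have key : ∀ e : ℝ, 0 ≤ e →
          a ^ e * (1 - δ) ^ ((n : ℝ) - e) = r ^ e * (1 - δ) ^ (n : ℝ) := by
        intro e he
        rw [har, Real.mul_rpow hr0.le h1δ.le, mul_assoc, ← Real.rpow_add h1δ]
        ring_nf
      have lhs_eq : a ^ (δ * n) * (1 - δ) ^ ((1 - δ) * n)
          = r ^ (δ * n) * (1 - δ) ^ (n : ℝ) := by
        have := key (δ * n) (by positivity)
        rw [show (n : ℝ) - δ * n = (1 - δ) * n by ring] at this
        exact this
      have rhs_eq : (1 - δ) ^ (((n:ℝ) - hammingNorm y)) * a ^ ((hammingNorm y : ℝ))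
          = r ^ ((hammingNorm y : ℝ)) * (1 - δ) ^ (n : ℝ) := by
        rw [mul_comm]
        exact key _ (by positivity)
      rw [lhs_eq, rhs_eq]
      have : r ^ (δ * n) ≤ r ^ ((hammingNorm y : ℝ)) :=
        Real.rpow_le_rpow_of_exponent_ge hr0 hr1 hwtδ
      exact mul_le_mul_of_nonneg_right this (Real.rpow_nonneg h1δ.le _)
    -- sum over all y equals 1
    have hsum_all : ∑ y : Fin n → F, ∏ i, f (y i) = 1 := by
      have := Finset.prod_univ_sum (fun _ : Fin n => (univ : Finset F)) (fun _ x => f x)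
      rw [Fintype.piFinset_univ] at this
      rw [← this, Finset.prod_congr rfl (fun i _ => hsumf), Finset.prod_const, one_pow]
    set S := (univ : Finset (Fin n → F)).filter (fun y => ((hammingNorm y : ℝ)) / n < δ) with hS
    have hcardS : (S.card : ℝ) * (q : ℝ) ^ (-(qEntropy q δ * n)) ≤ 1 := by
      calc (S.card : ℝ) * (q : ℝ) ^ (-(qEntropy q δ * n))
          = ∑ _y ∈ S, (q : ℝ) ^ (-(qEntropy q δ * n)) := by
            rw [Finset.sum_const, nsmul_eq_mul]
        _ ≤ ∑ y ∈ S, ∏ i, f (y i) := by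
            apply Finset.sum_le_sum
            intro y hy
            rw [hS, Finset.mem_filter] at hy
            exact hpt y hy.2
        _ ≤ ∑ y : Fin n → F, ∏ i, f (y i) := by
            apply Finset.sum_le_sum_of_subset_of_nonneg (Finset.filter_subset _ _)
            intro y _ _
            exact Finset.prod_nonneg (fun i _ => hf0 _)
        _ = 1 := hsum_all
    have hX : (0:ℝ) < (q : ℝ) ^ (qEntropy q δ * n) := Real.rpow_pos_of_pos hq0 _
    calc (S.card : ℝ) = (S.card : ℝ) * (q : ℝ) ^ (-(qEntropy q δ * n)) * (q : ℝ) ^ (qEntropy q δ * n) := by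
          rw [mul_assoc, ← Real.rpow_add hq0]
          simp
      _ ≤ 1 * (q : ℝ) ^ (qEntropy q δ * n) := mul_le_mul_of_nonneg_right hcardS hX.le
      _ = (q : ℝ) ^ (qEntropy q δ * n) := one_mul _

lemma fiber_count (F : Type*) [Field F] [Fintype F] [DecidableEq F] (q : ℕ)
    (hq : Fintype.card F = q) (n k : ℕ) (m : Fin k → F) (hm : m ≠ 0)
    (P : (Fin n → F) → Prop) [DecidablePred P] :
    ((univ : Finset (Matrix (Fin n) (Fin k) F)).filter (fun G => P (G.mulVec m))).card * q ^ n
      = ((univ : Finset (Fin n → F)).filter P).card * q ^ (n * k) := by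
  classical
  obtain ⟨i0, hi0⟩ : ∃ i, m i ≠ 0 := Function.ne_iff.mp hm
  -- a section of G ↦ G.mulVec m
  set g0 : (Fin n → F) → Matrix (Fin n) (Fin k) F :=
    fun y => Matrix.of (fun r j => if j = i0 then (m i0)⁻¹ * y r else 0) with hg0
  have hsec : ∀ y, (g0 y).mulVec m = y := by
    intro y
    funext r
    simp only [hg0, Matrix.mulVec, dotProduct, Matrix.of_apply, ite_mul, zero_mul]
    rw [Finset.sum_ite_eq' univ i0 (fun j => (m i0)⁻¹ * y r * m j)]
    simp [hi0]
    field_simp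
  set K := ((univ : Finset (Matrix (Fin n) (Fin k) F)).filter (fun G => G.mulVec m = 0)).card
    with hK
  -- every fiber has K elements
  have hfib : ∀ y : Fin n → F,
      ((univ : Finset (Matrix (Fin n) (Fin k) F)).filter (fun G => G.mulVec m = y)).card = K := by
    intro y
    rw [hK]
    apply Finset.card_bij' (i := fun G _ => G - g0 y) (j := fun G _ => G + g0 y)
    · intro G hG
      rw [Finset.mem_filter] at *
      refine ⟨Finset.mem_univ _, ?_⟩
      rw [Matrix.sub_mulVec, hG.2, hsec, sub_self]
    · intro G hG
      rw [Finset.mem_filter] at *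
      refine ⟨Finset.mem_univ _, ?_⟩
      rw [Matrix.add_mulVec, hG.2, hsec, zero_add]
    · intro G _; abel
    · intro G _; abel
  have hcardM : Fintype.card (Matrix (Fin n) (Fin k) F) = q ^ (n * k) := by
    show Fintype.card (Fin n → Fin k → F) = q ^ (n * k)
    simp [hq]
    ring
  have hcardV : Fintype.card (Fin n → F) = q ^ n := by simp [hq]
  -- total count
  have htot : q ^ (n * k) = q ^ n * K := by
    rw [← hcardM, ← Finset.card_univ]
    rw [Finset.card_eq_sum_card_fiberwise (f := fun G => G.mulVec m)
      (t := (univ : Finset (Fin n → F))) (fun x _ => Finset.mem_univ _)]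
    rw [Finset.sum_congr rfl (fun y _ => hfib y), Finset.sum_const, Finset.card_univ, hcardV,
      smul_eq_mul]
  -- fiberwise count of the filtered set
  have hmain : ((univ : Finset (Matrix (Fin n) (Fin k) F)).filter
      (fun G => P (G.mulVec m))).card = ((univ : Finset (Fin n → F)).filter P).card * K := by
    rw [Finset.card_eq_sum_card_fiberwise (f := fun G => G.mulVec m)
      (t := (univ : Finset (Fin n → F)).filter P)
      (fun x hx => by rw [Finset.mem_coe, Finset.mem_filter] at hx ⊢; exact ⟨Finset.mem_univ _, hx.2⟩)]
    rw [Finset.sum_congr rfl (fun y hy => ?_), Finset.sum_const, smul_eq_mul]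
    rw [Finset.mem_filter] at hy
    rw [Finset.filter_filter]
    have heq : Finset.filter (fun a : Matrix (Fin n) (Fin k) F =>
        P (a.mulVec m) ∧ a.mulVec m = y) univ
        = Finset.filter (fun a : Matrix (Fin n) (Fin k) F => a.mulVec m = y) univ :=
      Finset.filter_congr (fun G _ => ⟨fun h => h.2, fun h => ⟨by rw [h]; exact hy.2, h⟩⟩)
    rw [heq]
    exact hfib y
  rw [hmain, htot]
  ring

/-- Gilbert–Varshamov bound: a uniformly random linear code of rate
`ρ < 1 - H_q(δ)` has relative distance at least `δ` with probability
`1 - 2^{-Ω(n)}`, for sufficiently large `n`. -/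
theorem gilbert_varshamov (F : Type*) [Field F] [Fintype F] [DecidableEq F] (q : ℕ)
    (hq : Fintype.card F = q) (δ ρ : ℝ) (hδ0 : 0 ≤ δ) (hδ : δ < 1 - 1 / q)
    (hρ0 : 0 ≤ ρ) (hρ : ρ < 1 - qEntropy q δ) :
    ∃ c : ℝ, 0 < c ∧ ∃ N : ℕ, ∀ n : ℕ, N ≤ n →
      (1 : ℝ) - 2 ^ (-(c * n)) ≤
        (Nat.card {G : Matrix (Fin n) (Fin ⌊ρ * n⌋₊) F //
            ∀ m : Fin ⌊ρ * n⌋₊ → F, m ≠ 0 → δ ≤ (hammingNorm (G.mulVec m) : ℝ) / n} : ℝ)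
          / (Nat.card (Matrix (Fin n) (Fin ⌊ρ * n⌋₊) F) : ℝ) := by
  classical
  have hq2 : 2 ≤ q := by rw [← hq]; exact Fintype.one_lt_card
  have hq1 : (1 : ℝ) < (q : ℝ) := by exact_mod_cast lt_of_lt_of_le one_lt_two hq2
  have hq0 : (0 : ℝ) < q := lt_trans one_pos hq1
  set H := qEntropy q δ with hH
  set ε := 1 - H - ρ with hε
  have hε0 : 0 < ε := by rw [hε]; linarith
  have hlogq : 0 < Real.logb 2 q := Real.logb_pos one_lt_two hq1
  refine ⟨ε * Real.logb 2 q, mul_pos hε0 hlogq, 0, fun n _ => ?_⟩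
  set c := ε * Real.logb 2 q with hc
  set k := ⌊ρ * n⌋₊ with hk
  have hkn : (k : ℝ) ≤ ρ * n := Nat.floor_le (by positivity)
  -- identify the cardinalities with Finset counts
  set good := (univ : Finset (Matrix (Fin n) (Fin k) F)).filter
    (fun G => ∀ m : Fin k → F, m ≠ 0 → δ ≤ (hammingNorm (G.mulVec m) : ℝ) / n) with hgood
  set bad := (univ : Finset (Matrix (Fin n) (Fin k) F)).filter
    (fun G => ¬ ∀ m : Fin k → F, m ≠ 0 → δ ≤ (hammingNorm (G.mulVec m) : ℝ) / n) with hbad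
  have hcardM : Fintype.card (Matrix (Fin n) (Fin k) F) = q ^ (n * k) := by
    show Fintype.card (Fin n → Fin k → F) = q ^ (n * k)
    simp [hq]
    ring
  have htotal : (Nat.card (Matrix (Fin n) (Fin k) F) : ℝ) = (q : ℝ) ^ (n * k) := by
    rw [Nat.card_eq_fintype_card, hcardM]
    push_cast
    ring
  have hgoodcard : (Nat.card {G : Matrix (Fin n) (Fin k) F //
      ∀ m : Fin k → F, m ≠ 0 → δ ≤ (hammingNorm (G.mulVec m) : ℝ) / n} : ℕ) = good.card := by
    rw [Nat.card_eq_fintype_card, Fintype.card_subtype]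
  have hsplit : good.card + bad.card = q ^ (n * k) := by
    rw [hgood, hbad, Finset.card_filter_add_card_filter_not, Finset.card_univ, hcardM]
  -- union bound on bad
  set B := ((univ : Finset (Fin n → F)).filter
    (fun y => ((hammingNorm y : ℝ)) / n < δ)).card with hB
  have hunion : bad.card * q ^ n ≤ q ^ k * B * q ^ (n * k) := by
    have hsub : bad ⊆ ((univ : Finset (Fin k → F)).filter (fun m => m ≠ 0)).biUnion
        (fun m => (univ : Finset (Matrix (Fin n) (Fin k) F)).filter
          (fun G => ((hammingNorm (G.mulVec m) : ℝ)) / n < δ)) := by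
      intro G hG
      rw [hbad, Finset.mem_filter] at hG
      push_neg at hG
      obtain ⟨m, hm, hlt⟩ := hG.2
      rw [Finset.mem_biUnion]
      exact ⟨m, by simp [hm], by simp [hlt]⟩
    set nz := (univ : Finset (Fin k → F)).filter (fun m => m ≠ 0) with hnz
    have hnzcard : nz.card ≤ q ^ k := by
      calc nz.card ≤ (univ : Finset (Fin k → F)).card := Finset.card_filter_le _ _
        _ = q ^ k := by rw [Finset.card_univ]; simp [hq]
    calc bad.card * q ^ n
        ≤ (nz.biUnion (fun m => (univ : Finset (Matrix (Fin n) (Fin k) F)).filter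
            (fun G => ((hammingNorm (G.mulVec m) : ℝ)) / n < δ))).card * q ^ n :=
          Nat.mul_le_mul_right _ (Finset.card_le_card hsub)
      _ ≤ (∑ m ∈ nz, ((univ : Finset (Matrix (Fin n) (Fin k) F)).filter
            (fun G => ((hammingNorm (G.mulVec m) : ℝ)) / n < δ)).card) * q ^ n :=
          Nat.mul_le_mul_right _ Finset.card_biUnion_le
      _ = ∑ m ∈ nz, ((univ : Finset (Matrix (Fin n) (Fin k) F)).filter
            (fun G => ((hammingNorm (G.mulVec m) : ℝ)) / n < δ)).card * q ^ n := by
          rw [Finset.sum_mul]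
      _ = ∑ _m ∈ nz, B * q ^ (n * k) := by
          refine Finset.sum_congr rfl (fun m hm => ?_)
          rw [hnz, Finset.mem_filter] at hm
          rw [hB]
          exact fiber_count F q hq n k m hm.2 (fun y => ((hammingNorm y : ℝ)) / n < δ)
      _ = nz.card * (B * q ^ (n * k)) := by rw [Finset.sum_const, smul_eq_mul]
      _ ≤ q ^ k * (B * q ^ (n * k)) := Nat.mul_le_mul_right _ hnzcard
      _ = q ^ k * B * q ^ (n * k) := by ring
  -- move to the reals
  set T : ℝ := (q : ℝ) ^ (n * k) with hT
  have hT0 : (0 : ℝ) < T := by positivity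
  have hQn : (0 : ℝ) < (q : ℝ) ^ n := by positivity
  have hbadR : (bad.card : ℝ) * (q : ℝ) ^ n ≤ (q : ℝ) ^ k * (B : ℝ) * T := by
    rw [hT]
    exact_mod_cast hunion
  have hfrac : (bad.card : ℝ) / T ≤ (q : ℝ) ^ k * (B : ℝ) / (q : ℝ) ^ n := by
    rw [div_le_div_iff₀ hT0 hQn]
    linarith
  have hball : (B : ℝ) ≤ (q : ℝ) ^ (H * n) := by
    have h := ball_bound F q hq δ hδ0 hδ n
    rw [hH]
    convert h using 4
  have hfrac2 : (q : ℝ) ^ k * (B : ℝ) / (q : ℝ) ^ n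
      ≤ (q : ℝ) ^ k * (q : ℝ) ^ (H * (n:ℝ)) / (q : ℝ) ^ n := by
    gcongr
  have h2q : (2 : ℝ) ^ (-(c * (n:ℝ))) = (q : ℝ) ^ (-(ε * (n:ℝ))) := by
    rw [hc, show -(ε * Real.logb 2 q * n) = Real.logb 2 q * (-(ε * n)) by ring,
      Real.rpow_mul (by norm_num : (0:ℝ) ≤ 2), Real.rpow_logb two_pos (by norm_num) hq0]
  have hexp : (q : ℝ) ^ k * (q : ℝ) ^ (H * (n:ℝ)) / (q : ℝ) ^ n ≤ (2 : ℝ) ^ (-(c * (n:ℝ))) := by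
    rw [h2q, ← Real.rpow_natCast (q:ℝ) k, ← Real.rpow_natCast (q:ℝ) n,
      ← Real.rpow_add hq0, ← Real.rpow_sub hq0]
    apply Real.rpow_le_rpow_of_exponent_le hq1.le
    rw [hε]
    linarith
  have hbadfrac : (bad.card : ℝ) / T ≤ (2 : ℝ) ^ (-(c * (n:ℝ))) :=
    hfrac.trans (hfrac2.trans hexp)
  -- conclude
  rw [htotal, hgoodcard]
  have hgb : (good.card : ℝ) + (bad.card : ℝ) = T := by
    rw [hT]
    exact_mod_cast hsplit
  have hgoodfrac : (good.card : ℝ) / T = 1 - (bad.card : ℝ) / T := by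
    field_simp
    linarith
  rw [hgoodfrac]
  linarith
end

section
/- For any prime power q, any real 0 ≤ α < 1 - 1/q, any positive integer L, any 0 ≤ ρ < 1 - H_q(α) - 1/log_q(L+1), and all sufficiently large n, a uniformly random linear code C : F_q^{⌊ρn⌋} → F_q^n is (α, L)-list decodable with probability at least 1 - 2^{-Ω(n)}. -/
open Finset

lemma card_fiber_eq {M N : Type*} [AddCommGroup M] [AddCommGroup N] [Fintype M]
    [DecidableEq N] (φ : M →+ N) (y : N) (m₀ : M) (h : φ m₀ = y) :
    #(univ.filter (fun m => φ m = y)) = #(univ.filter (fun m => φ m = 0)) := by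
  apply Finset.card_nbij' (fun m => m - m₀) (fun m => m + m₀)
  · intro a ha
    simp only [mem_coe, mem_filter, mem_univ, true_and] at ha ⊢
    simp [map_sub, ha, h]
  · intro a ha
    simp only [mem_coe, mem_filter, mem_univ, true_and] at ha ⊢
    simp [map_add, ha, h]
  · intro a _; simp
  · intro a _; simp

lemma card_preimage_mul {M N : Type*} [AddCommGroup M] [AddCommGroup N] [Fintype M] [Fintype N]
    [DecidableEq N] (φ : M →+ N) (hs : Function.Surjective φ) (S : Finset N) :
    #(univ.filter (fun m => φ m ∈ S)) * Fintype.card N = #S * Fintype.card M := by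
  set K := #(univ.filter (fun m => φ m = (0 : N))) with hK
  have key : ∀ T : Finset N, #(univ.filter (fun m => φ m ∈ T)) = #T * K := by
    intro T
    rw [Finset.card_eq_sum_card_fiberwise (f := φ) (s := univ.filter (fun m => φ m ∈ T)) (t := T)
      (fun x hx => (mem_filter.mp hx).2)]
    rw [Finset.sum_congr rfl (fun y hy => ?_), Finset.sum_const, smul_eq_mul]
    have : (filter (fun a => φ a = y) (filter (fun m => φ m ∈ T) univ))
        = univ.filter (fun m => φ m = y) := by
      ext m
      simp only [mem_filter, mem_univ, true_and]
      constructor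
      · rintro ⟨-, h2⟩; exact h2
      · intro h2; exact ⟨h2 ▸ hy, h2⟩
    rw [this]
    obtain ⟨m₀, hm₀⟩ := hs y
    exact card_fiber_eq φ y m₀ hm₀
  have h1 := key S
  have h2 := key univ
  simp only [mem_univ, filter_true_of_mem (fun _ _ => trivial), card_univ] at h2
  -- h2 : Fintype.card M = #univ * K
  rw [h1, h2]
  ring


lemma eval_surjective {F : Type*} [Field F] [Fintype F] [DecidableEq F] {k n J : ℕ}
    (v : Fin J → (Fin k → F)) (hv : LinearIndependent F v) :
    Function.Surjective (fun (G : Matrix (Fin n) (Fin k) F) => fun j => G.mulVec (v j)) := by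
  intro y
  set W := Submodule.span F (Set.range v) with hW
  let B : Module.Basis (Fin J) F W := Module.Basis.span hv
  let g₀ : W →ₗ[F] (Fin n → F) := B.constr F y
  obtain ⟨g, hg⟩ := LinearMap.exists_extend g₀
  refine ⟨LinearMap.toMatrix' g, ?_⟩
  funext j
  have hmem : v j ∈ W := Submodule.subset_span (Set.mem_range_self j)
  have h1 : (LinearMap.toMatrix' g).mulVec (v j) = g (v j) := by
    rw [← Matrix.toLin'_apply, Matrix.toLin'_toMatrix']
  have h2 : g (v j) = g₀ ⟨v j, hmem⟩ := by
    have := congrFun (congrArg (fun f => f.toFun) hg) ⟨v j, hmem⟩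
    simpa using this
  have h3 : g₀ ⟨v j, hmem⟩ = y j := by
    have hb : (B j : Fin k → F) = v j := by rw [Module.Basis.span_apply]
    have : B j = ⟨v j, hmem⟩ := Subtype.ext hb
    rw [← this]
    exact B.constr_basis F y j
  simp only [h1, h2, h3]

lemma exists_linIndep_subfamily' {F : Type*} [Field F] [Fintype F] [DecidableEq F] {k J L : ℕ}
    (hq2 : 1 < Fintype.card F) (hJ : J = Nat.clog (Fintype.card F) (L + 1))
    (S : Set (Fin k → F)) (hS : L + 1 ≤ Nat.card S) :
    ∃ v : Fin J → (Fin k → F), LinearIndependent F v ∧ ∀ j, v j ∈ S := by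
  classical
  obtain ⟨b, hbS, hspan, hli⟩ := exists_linearIndependent F S
  have hbfin : b.Finite := Set.toFinite b
  haveI : Fintype b := hbfin.fintype
  -- S ⊆ range of the linear-combination map on coefficients
  have hsub : S ⊆ Set.range (fun c : b → F => ∑ i : b, c i • (i : Fin k → F)) := by
    intro s hsS
    have : s ∈ Submodule.span F b := hspan ▸ Submodule.subset_span hsS
    rw [← Subtype.range_coe (s := b), Submodule.mem_span_range_iff_exists_fun] at this
    obtain ⟨c, hc⟩ := this
    exact ⟨c, hc⟩
  have hcard : Nat.card S ≤ Fintype.card F ^ Fintype.card b := by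
    calc Nat.card S ≤ Nat.card (Set.range (fun c : b → F => ∑ i : b, c i • (i : Fin k → F))) := by
          haveI : Finite (Fin k → F) := inferInstance
          exact Nat.card_mono (Set.toFinite _) hsub
      _ ≤ Nat.card (b → F) := Finite.card_range_le _
      _ = Fintype.card F ^ Fintype.card b := by
          rw [Nat.card_eq_fintype_card, Fintype.card_fun]
  have hJb : J ≤ Fintype.card b := by
    rw [hJ, Nat.clog_le_iff_le_pow hq2]
    exact hS.trans hcard
  obtain ⟨e⟩ := Function.Embedding.nonempty_of_card_le (α := Fin J) (β := b) (by simpa using hJb)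
  refine ⟨fun j => (e j : Fin k → F), hli.comp e e.injective, fun j => hbS (e j).2⟩

lemma ball_card_le {F : Type*} [Field F] [Fintype F] [DecidableEq F] {q n : ℕ}
    (hq : Fintype.card F = q) {α : ℝ} (hα0 : 0 ≤ α) (hα : α < 1 - 1/q) (w : Fin n → F) :
    (#(univ.filter (fun v : Fin n → F => (hammingDist v w : ℝ) ≤ α * n)) : ℝ)
      ≤ (q:ℝ) ^ (qEntropy q α * n) := by
  have hq2 : 1 < q := hq ▸ Fintype.one_lt_card
  have hqR : (2:ℝ) ≤ (q:ℝ) := by exact_mod_cast hq2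
  have hq0 : (0:ℝ) < q := by linarith
  have hq1 : (1:ℝ) ≤ (q:ℝ) - 1 := by linarith
  have hlogq : Real.log q ≠ 0 := by
    have := Real.log_pos (by linarith : (1:ℝ) < q); linarith
  rcases eq_or_lt_of_le hα0 with h0 | h0
  · -- α = 0
    subst h0
    have hset : (univ.filter (fun v : Fin n → F => (hammingDist v w : ℝ) ≤ 0 * n)) = {w} := by
      ext v
      simp only [mem_filter, mem_univ, true_and, mem_singleton, zero_mul]
      constructor
      · intro h
        have : hammingDist v w = 0 := by exact_mod_cast le_antisymm (by exact_mod_cast h) (Nat.zero_le _)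
        exact hammingDist_eq_zero.mp this
      · rintro rfl; simp
    rw [hset]
    have : qEntropy q 0 = 0 := by simp [qEntropy]
    rw [this, zero_mul, Real.rpow_zero]
    simp
  · -- 0 < α
    have hα1 : α < 1 := by
      have : (0:ℝ) < 1/q := by positivity
      linarith
    have h1α : (0:ℝ) < 1 - α := by linarith
    have hαq : α * q ≤ (q:ℝ) - 1 := by
      have := mul_lt_mul_of_pos_right hα hq0
      rw [sub_mul, one_mul, div_mul_cancel₀] at this
      · linarith
      · exact ne_of_gt hq0
    set t : ℝ := α / (((q:ℝ) - 1) * (1 - α)) with ht_def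
    have hden : (0:ℝ) < ((q:ℝ) - 1) * (1 - α) := by nlinarith
    have ht0 : 0 < t := div_pos h0 hden
    have ht1 : t ≤ 1 := by
      rw [div_le_one hden]
      nlinarith
    -- sum identity
    have key : ∑ v : Fin n → F, t ^ (hammingDist v w) = (1 + ((q:ℝ)-1) * t) ^ n := by
      have step1 : ∀ v : Fin n → F, t ^ (hammingDist v w)
          = ∏ i : Fin n, (if v i = w i then (1:ℝ) else t) := by
        intro v
        rw [Finset.prod_ite, Finset.prod_const, Finset.prod_const, one_pow, one_mul]
        congr 1
      have step2 : ∀ i : Fin n, ∑ a : F, (if a = w i then (1:ℝ) else t)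
          = 1 + ((q:ℝ)-1) * t := by
        intro i
        rw [Finset.sum_ite, Finset.sum_const, Finset.sum_const]
        have h1 : (univ.filter (fun a : F => a = w i)).card = 1 := by
          simp [Finset.filter_eq']
        have h2 : (univ.filter (fun a : F => ¬ a = w i)).card = q - 1 := by
          have := Finset.card_filter_add_card_filter_not
            (s := (univ : Finset F)) (p := fun a => a = w i)
          rw [h1, card_univ, hq] at this
          omega
        rw [h1, h2]
        have : ((q - 1 : ℕ) : ℝ) = (q:ℝ) - 1 := by
          push_cast [Nat.cast_sub (le_of_lt hq2)]; ring
        simp [this]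
      calc ∑ v : Fin n → F, t ^ (hammingDist v w)
          = ∑ v : Fin n → F, ∏ i : Fin n, (if v i = w i then (1:ℝ) else t) := by
            exact Finset.sum_congr rfl (fun v _ => step1 v)
        _ = ∑ v ∈ Fintype.piFinset (fun _ : Fin n => (univ : Finset F)),
              ∏ i : Fin n, (if v i = w i then (1:ℝ) else t) := by
            rw [Fintype.piFinset_univ]
        _ = ∏ i : Fin n, ∑ a : F, (if a = w i then (1:ℝ) else t) := by
            rw [Finset.prod_univ_sum]
        _ = (1 + ((q:ℝ)-1) * t) ^ n := by
            rw [Finset.prod_congr rfl (fun i _ => step2 i), Finset.prod_const, card_univ]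
            simp
    have hsum_val : (1 + ((q:ℝ)-1) * t) = 1/(1-α) := by
      rw [eq_div_iff (ne_of_gt h1α), ht_def]
      field_simp
      ring
    -- main bound
    set B := (univ.filter (fun v : Fin n → F => (hammingDist v w : ℝ) ≤ α * n)) with hB
    have hbound : (#B : ℝ) * t ^ (α * n) ≤ (1/(1-α)) ^ n := by
      rw [← hsum_val, ← key]
      calc (#B : ℝ) * t ^ (α * n) = ∑ _v ∈ B, t ^ (α * n) := by
            rw [Finset.sum_const, nsmul_eq_mul]
        _ ≤ ∑ v ∈ B, t ^ (hammingDist v w) := by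
            apply Finset.sum_le_sum
            intro v hv
            have hd : (hammingDist v w : ℝ) ≤ α * n := (mem_filter.mp hv).2
            calc t ^ (α * n) ≤ t ^ ((hammingDist v w : ℕ) : ℝ) :=
                  Real.rpow_le_rpow_of_exponent_ge ht0 ht1 hd
              _ = t ^ (hammingDist v w) := Real.rpow_natCast t _
        _ ≤ ∑ v : Fin n → F, t ^ (hammingDist v w) := by
            apply Finset.sum_le_sum_of_subset_of_nonneg (Finset.subset_univ B)
            intro v _ _
            positivity
    have htpow : (0:ℝ) < t ^ (α * n) := Real.rpow_pos_of_pos ht0 _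
    have hfinal : (#B : ℝ) ≤ t ^ (-(α * n)) * (1/(1-α)) ^ n := by
      rw [Real.rpow_neg (le_of_lt ht0)]
      calc (#B : ℝ) ≤ (1/(1-α)) ^ n / t ^ (α * n) := (le_div_iff₀ htpow).mpr hbound
        _ = (t ^ (α * n))⁻¹ * (1/(1-α)) ^ n := div_eq_inv_mul _ _
    refine hfinal.trans (le_of_eq ?_)
    -- exact identity: t^{-αn} * (1/(1-α))^n = q^{H(α) n}
    have hql : (0:ℝ) < (q:ℝ) - 1 := by linarith
    rw [← Real.rpow_natCast (1/(1-α)) n]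
    rw [Real.rpow_def_of_pos ht0, Real.rpow_def_of_pos (by positivity : (0:ℝ) < 1/(1-α)),
      Real.rpow_def_of_pos hq0, ← Real.exp_add]
    congr 1
    have hlt : Real.log t = Real.log α - (Real.log ((q:ℝ)-1) + Real.log (1-α)) := by
      rw [ht_def, Real.log_div (ne_of_gt h0) (ne_of_gt hden), Real.log_mul (ne_of_gt hql) (ne_of_gt h1α)]
    have hl1 : Real.log (1/(1-α)) = - Real.log (1-α) := by
      rw [one_div, Real.log_inv]
    have hE : qEntropy q α * Real.log q
        = α * Real.log ((q:ℝ)-1) - α * Real.log α - (1-α) * Real.log (1-α) := by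
      unfold qEntropy
      rw [Real.logb, Real.logb, Real.logb]
      rw [one_div, one_div, Real.log_inv, Real.log_inv]
      field_simp
      ring
    have : qEntropy q α * (n:ℝ) * Real.log q = (qEntropy q α * Real.log q) * n := by ring
    rw [mul_comm (Real.log q) (qEntropy q α * (n:ℝ)), this, hE, hlt, hl1]
    ring

set_option maxHeartbeats 1000000 in
/-- A uniformly random linear code of rate `ρ < 1 - H_q(α) - 1/log_q(L+1)` is
`(α, L)`-list decodable with probability `1 - 2^{-Ω(n)}`, for sufficiently large `n`. -/
theorem random_linear_list_decodable (F : Type*) [Field F] [Fintype F] [DecidableEq F]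
    (q : ℕ) (hq : Fintype.card F = q) (α ρ : ℝ) (L : ℕ) (hL : 0 < L)
    (hα0 : 0 ≤ α) (hα : α < 1 - 1 / q)
    (hρ0 : 0 ≤ ρ) (hρ : ρ < 1 - qEntropy q α - 1 / Real.logb q (L + 1)) :
    ∃ c : ℝ, 0 < c ∧ ∃ N : ℕ, ∀ n : ℕ, N ≤ n →
      (1 : ℝ) - 2 ^ (-(c * n)) ≤
        (Nat.card {G : Matrix (Fin n) (Fin ⌊ρ * n⌋₊) F //
            ∀ w : Fin n → F,
              Nat.card {x : Fin ⌊ρ * n⌋₊ → F |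
                (hammingDist (G.mulVec x) w : ℝ) / n ≤ α} ≤ L} : ℝ)
          / (Nat.card (Matrix (Fin n) (Fin ⌊ρ * n⌋₊) F) : ℝ) := by
  classical
  have hq2 : 1 < q := hq ▸ Fintype.one_lt_card
  have hqR : (2:ℝ) ≤ (q:ℝ) := by exact_mod_cast hq2
  have hq0 : (0:ℝ) < q := by linarith
  set J := Nat.clog q (L + 1) with hJdef
  have hL2 : (1:ℝ) < (L:ℝ) + 1 := by
    have : (0:ℝ) < L := by exact_mod_cast hL
    linarith
  have hlq : 0 < Real.logb q ((L:ℝ) + 1) :=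
    Real.logb_pos (by exact_mod_cast hq2) hL2
  have hJlq : Real.logb q ((L:ℝ) + 1) ≤ (J:ℝ) := by
    have h1 : (L + 1 : ℕ) ≤ q ^ J := Nat.le_pow_clog hq2 _
    have h1R : ((L:ℝ) + 1) ≤ (q:ℝ) ^ J := by exact_mod_cast h1
    calc Real.logb q ((L:ℝ) + 1) ≤ Real.logb q ((q:ℝ) ^ J) :=
          (Real.logb_le_logb (by exact_mod_cast hq2) (by linarith) (pow_pos hq0 J)).mpr h1R
      _ = J := by rw [Real.logb_pow, Real.logb_self_eq_one (by exact_mod_cast hq2)]; ring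
  have hJ0R : (0:ℝ) < J := lt_of_lt_of_le hlq hJlq
  have hJ0 : 0 < J := by exact_mod_cast hJ0R
  set H := qEntropy q α with hH
  set ε : ℝ := (1 - H - ρ) - 1/(J:ℝ) with hε
  have hε0 : 0 < ε := by
    have h1 : 1/(J:ℝ) ≤ 1/Real.logb q ((L:ℝ) + 1) := one_div_le_one_div_of_le hlq hJlq
    rw [hε]
    linarith
  refine ⟨J * ε, mul_pos hJ0R hε0, 1, fun n hn => ?_⟩
  set k := ⌊ρ * (n:ℝ)⌋₊ with hk_def
  have hn0 : (0:ℝ) < n := by exact_mod_cast hn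
  have hk : (k:ℝ) ≤ ρ * n := Nat.floor_le (mul_nonneg hρ0 (Nat.cast_nonneg n))
  -- Ball and its bound
  set Ball : (Fin n → F) → Finset (Fin n → F) :=
    fun w => univ.filter (fun v => (hammingDist v w : ℝ) ≤ α * n) with hBall
  have hBall_le : ∀ w, (#(Ball w) : ℝ) ≤ (q:ℝ) ^ (H * n) := fun w => ball_card_le hq hα0 hα w
  -- total counts
  have htotM : Fintype.card (Matrix (Fin n) (Fin k) F) = q ^ (n * k) := by
    have e : (Fin n → Fin k → F) ≃ Matrix (Fin n) (Fin k) F := Matrix.of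
    rw [← Fintype.card_congr e, Fintype.card_fun, Fintype.card_fun, hq, Fintype.card_fin,
      Fintype.card_fin, ← pow_mul, Nat.mul_comm]
  have htotN : Fintype.card (Fin J → Fin n → F) = q ^ (n * J) := by
    rw [Fintype.card_fun, Fintype.card_fun, hq, Fintype.card_fin, Fintype.card_fin,
      ← pow_mul, Nat.mul_comm]
  set P : Matrix (Fin n) (Fin k) F → Prop := fun G => ∀ w : Fin n → F,
    Nat.card {x : Fin k → F | (hammingDist (G.mulVec x) w : ℝ) / n ≤ α} ≤ L with hP
  set Bad : Finset (Matrix (Fin n) (Fin k) F) := univ.filter (fun G => ¬ P G) with hBad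
  set T : Finset (Fin J → Fin k → F) := univ.filter (fun v => LinearIndependent F v) with hT
  set Fib : (Fin n → F) → (Fin J → Fin k → F) → Finset (Matrix (Fin n) (Fin k) F) :=
    fun w v => univ.filter (fun G => ∀ j, G.mulVec (v j) ∈ Ball w) with hFib
  -- Step A : every bad matrix is in some fiber
  have hsubset : Bad ⊆ (univ ×ˢ T).biUnion (fun p => Fib p.1 p.2) := by
    intro G hG
    rw [hBad, mem_filter] at hG
    obtain ⟨-, hG⟩ := hG
    have hG' : ¬ ∀ w : Fin n → F,
        Nat.card {x : Fin k → F | (hammingDist (G.mulVec x) w : ℝ) / n ≤ α} ≤ L := hG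
    obtain ⟨w, hw⟩ := not_forall.mp hG'
    rw [not_le] at hw
    have hset : {x : Fin k → F | (hammingDist (G.mulVec x) w : ℝ) / n ≤ α}
        = {x : Fin k → F | G.mulVec x ∈ Ball w} := by
      ext x
      simp only [Set.mem_setOf_eq, hBall, mem_filter, mem_univ, true_and, div_le_iff₀ hn0]
    rw [hset] at hw
    obtain ⟨v, hli, hmem⟩ := exists_linIndep_subfamily' (L := L) (hq ▸ hq2)
      (by rw [hq]) _ hw
    apply Finset.mem_biUnion.mpr
    refine ⟨(w, v), ?_, ?_⟩
    · rw [Finset.mem_product]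
      exact ⟨mem_univ _, by rw [hT, mem_filter]; exact ⟨mem_univ _, hli⟩⟩
    · rw [hFib, mem_filter]
      exact ⟨mem_univ _, fun j => hmem j⟩
  -- Step C : fiber counting
  have hfib_count : ∀ w v, v ∈ T → #(Fib w v) * q ^ (n*J) = #(Ball w) ^ J * q ^ (n*k) := by
    intro w v hv
    have hli : LinearIndependent F v := by
      rw [hT, mem_filter] at hv; exact hv.2
    set φ : Matrix (Fin n) (Fin k) F →+ (Fin J → Fin n → F) :=
      AddMonoidHom.mk' (fun G => fun j => G.mulVec (v j)) (by
        intro A B; funext j; simp [Matrix.add_mulVec]) with hφ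
    have hsurj : Function.Surjective φ := eval_surjective v hli
    have hmain := card_preimage_mul φ hsurj (Fintype.piFinset (fun _ => Ball w))
    rw [htotN, htotM, Fintype.card_piFinset] at hmain
    have h1 : (univ.filter (fun m => φ m ∈ Fintype.piFinset (fun _ => Ball w))) = Fib w v := by
      ext G
      simp only [mem_filter, mem_univ, true_and, Fintype.mem_piFinset, hFib, hφ,
        AddMonoidHom.mk'_apply]
    rw [h1, Finset.prod_const, card_univ, Fintype.card_fin] at hmain
    exact hmain
  -- Step B : union bound, in ℕ
  have hB1 : #Bad ≤ ∑ p ∈ univ ×ˢ T, #(Fib p.1 p.2) :=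
    (Finset.card_le_card hsubset).trans Finset.card_biUnion_le
  have hB2 : #Bad * q^(n*J) ≤ ∑ p ∈ univ ×ˢ T, #(Ball p.1)^J * q^(n*k) := by
    calc #Bad * q^(n*J) ≤ (∑ p ∈ univ ×ˢ T, #(Fib p.1 p.2)) * q^(n*J) :=
          Nat.mul_le_mul_right _ hB1
      _ = ∑ p ∈ univ ×ˢ T, #(Fib p.1 p.2) * q^(n*J) := by rw [Finset.sum_mul]
      _ = ∑ p ∈ univ ×ˢ T, #(Ball p.1)^J * q^(n*k) :=
          Finset.sum_congr rfl (fun p hp => hfib_count p.1 p.2 (Finset.mem_product.mp hp).2)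
  -- to ℝ
  have hcardT : (#T : ℝ) ≤ (q:ℝ) ^ (k*J) := by
    have h : #T ≤ q ^ (k*J) := by
      calc #T ≤ Fintype.card (Fin J → Fin k → F) := by
            rw [← card_univ]; exact Finset.card_le_card (Finset.filter_subset _ _)
        _ = q ^ (k*J) := by
            rw [Fintype.card_fun, Fintype.card_fun, hq, Fintype.card_fin, Fintype.card_fin,
              ← pow_mul, Nat.mul_comm]
    calc (#T : ℝ) ≤ ((q ^ (k*J) : ℕ) : ℝ) := by exact_mod_cast h
      _ = (q:ℝ) ^ (k*J) := by push_cast; rfl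
  have hB3 : (#Bad : ℝ) * (q:ℝ)^(n*J)
      ≤ ((q:ℝ)^n * (q:ℝ)^(k*J)) * (((q:ℝ)^(H*(n:ℝ)))^J * (q:ℝ)^(n*k)) := by
    have hcast : (#Bad : ℝ) * (q:ℝ)^(n*J)
        ≤ ∑ p ∈ univ ×ˢ T, (#(Ball p.1):ℝ)^J * (q:ℝ)^(n*k) := by
      have h : ((#Bad * q^(n*J) : ℕ) : ℝ)
          ≤ ((∑ p ∈ univ ×ˢ T, #(Ball p.1)^J * q^(n*k) : ℕ) : ℝ) := Nat.cast_le.mpr hB2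
      push_cast at h
      exact h
    refine hcast.trans ?_
    have hqnk : (0:ℝ) < (q:ℝ)^(n*k) := pow_pos hq0 _
    have hterm : ∀ p ∈ univ ×ˢ T, (#(Ball p.1):ℝ)^J * (q:ℝ)^(n*k)
        ≤ ((q:ℝ)^(H*(n:ℝ)))^J * (q:ℝ)^(n*k) := by
      intro p _
      refine mul_le_mul_of_nonneg_right ?_ hqnk.le
      exact pow_le_pow_left₀ (Nat.cast_nonneg _) (hBall_le p.1) J
    calc ∑ p ∈ univ ×ˢ T, (#(Ball p.1):ℝ)^J * (q:ℝ)^(n*k)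
        ≤ ∑ _p ∈ univ ×ˢ T, ((q:ℝ)^(H*(n:ℝ)))^J * (q:ℝ)^(n*k) := Finset.sum_le_sum hterm
      _ = (#(univ ×ˢ T) : ℝ) * (((q:ℝ)^(H*(n:ℝ)))^J * (q:ℝ)^(n*k)) := by
          rw [Finset.sum_const, nsmul_eq_mul]
      _ ≤ ((q:ℝ)^n * (q:ℝ)^(k*J)) * (((q:ℝ)^(H*(n:ℝ)))^J * (q:ℝ)^(n*k)) := by
          refine mul_le_mul_of_nonneg_right ?_ ?_
          · rw [Finset.card_product, card_univ, Fintype.card_fun, hq, Fintype.card_fin]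
            push_cast
            exact mul_le_mul_of_nonneg_left hcardT (le_of_lt (pow_pos hq0 n))
          · exact le_of_lt (mul_pos (pow_pos (Real.rpow_pos_of_pos hq0 _) J) hqnk)
  -- rewrite as rpow and bound exponents
  have hrp : ∀ m : ℕ, (q:ℝ) ^ m = (q:ℝ) ^ ((m:ℝ)) := fun m => (Real.rpow_natCast _ m).symm
  have hRHS : ((q:ℝ)^n * (q:ℝ)^(k*J)) * (((q:ℝ)^(H*(n:ℝ)))^J * (q:ℝ)^(n*k))
      = (q:ℝ) ^ ((n:ℝ) + (k:ℝ)*(J:ℝ) + H*(n:ℝ)*(J:ℝ) + (n:ℝ)*(k:ℝ)) := by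
    rw [hrp n, hrp (k*J), hrp (n*k), ← Real.rpow_natCast ((q:ℝ)^(H*(n:ℝ))) J,
      ← Real.rpow_mul hq0.le, ← Real.rpow_add hq0, ← Real.rpow_add hq0, ← Real.rpow_add hq0]
    congr 1
    push_cast
    ring
  have h4 : (#Bad:ℝ)
      ≤ (q:ℝ) ^ ((n:ℝ) + (k:ℝ)*(J:ℝ) + H*(n:ℝ)*(J:ℝ) + (n:ℝ)*(k:ℝ) - (n:ℝ)*(J:ℝ)) := by
    rw [Real.rpow_sub hq0, le_div_iff₀ (Real.rpow_pos_of_pos hq0 _), ← hRHS]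
    calc (#Bad:ℝ) * (q:ℝ) ^ ((n:ℝ)*(J:ℝ)) = (#Bad:ℝ) * (q:ℝ) ^ (n*J) := by
          rw [hrp (n*J)]; push_cast; ring_nf
      _ ≤ _ := hB3
  have hεn : (J:ℝ)*ε*(n:ℝ) = (J:ℝ)*(1-H-ρ)*(n:ℝ) - (n:ℝ) := by
    have hJne : (J:ℝ) ≠ 0 := ne_of_gt hJ0R
    rw [hε]
    field_simp
  have hexp : (n:ℝ) + (k:ℝ)*(J:ℝ) + H*(n:ℝ)*(J:ℝ) + (n:ℝ)*(k:ℝ) - (n:ℝ)*(J:ℝ)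
      ≤ (n:ℝ)*(k:ℝ) - (J:ℝ)*ε*(n:ℝ) := by
    have h5 : (k:ℝ)*(J:ℝ) ≤ ρ*(n:ℝ)*(J:ℝ) := mul_le_mul_of_nonneg_right hk (Nat.cast_nonneg J)
    rw [hεn]
    nlinarith [h5]
  have hx0 : (0:ℝ) ≤ (J:ℝ)*ε*(n:ℝ) := le_of_lt (mul_pos (mul_pos hJ0R hε0) hn0)
  have h7 : (q:ℝ) ^ (-((J:ℝ)*ε*(n:ℝ))) ≤ (2:ℝ) ^ (-((J:ℝ)*ε*(n:ℝ))) := by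
    rw [Real.rpow_neg hq0.le, Real.rpow_neg (by norm_num : (0:ℝ) ≤ 2)]
    exact inv_anti₀ (Real.rpow_pos_of_pos two_pos _)
      (Real.rpow_le_rpow (by norm_num) hqR hx0)
  have hBadfinal : (#Bad : ℝ) ≤ (2:ℝ) ^ (-((J:ℝ)*ε*(n:ℝ))) * (q:ℝ) ^ (n*k) := by
    calc (#Bad:ℝ)
        ≤ (q:ℝ) ^ ((n:ℝ) + (k:ℝ)*(J:ℝ) + H*(n:ℝ)*(J:ℝ) + (n:ℝ)*(k:ℝ) - (n:ℝ)*(J:ℝ)) := h4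
      _ ≤ (q:ℝ) ^ ((n:ℝ)*(k:ℝ) - (J:ℝ)*ε*(n:ℝ)) :=
          Real.rpow_le_rpow_of_exponent_le (by exact_mod_cast hq2.le) hexp
      _ = (q:ℝ) ^ ((n:ℝ)*(k:ℝ)) * (q:ℝ) ^ (-((J:ℝ)*ε*(n:ℝ))) := by
          rw [← Real.rpow_add hq0]; ring_nf
      _ ≤ (q:ℝ) ^ ((n:ℝ)*(k:ℝ)) * (2:ℝ) ^ (-((J:ℝ)*ε*(n:ℝ))) :=
          mul_le_mul_of_nonneg_left h7 (Real.rpow_pos_of_pos hq0 _).le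
      _ = (2:ℝ) ^ (-((J:ℝ)*ε*(n:ℝ))) * (q:ℝ) ^ (n*k) := by
          rw [hrp (n*k)]; push_cast; ring
  -- assemble the goal
  have hBadle : #Bad ≤ q^(n*k) := by
    rw [← htotM, ← card_univ]
    exact Finset.card_le_card (Finset.filter_subset _ _)
  have hcardPle : Fintype.card {G : Matrix (Fin n) (Fin k) F // P G}
      ≤ Fintype.card (Matrix (Fin n) (Fin k) F) := Fintype.card_subtype_le _
  have hgood : (Nat.card {G : Matrix (Fin n) (Fin k) F // P G} : ℝ)
      = ((q^(n*k) : ℕ) : ℝ) - (#Bad : ℝ) := by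
    rw [Nat.card_eq_fintype_card]
    have h9 : #Bad = Fintype.card {G : Matrix (Fin n) (Fin k) F // ¬ P G} :=
      (Fintype.card_subtype _).symm
    have h10 := Fintype.card_subtype_compl P
    have h8 : Fintype.card {G : Matrix (Fin n) (Fin k) F // P G} = q^(n*k) - #Bad := by
      omega
    rw [h8, Nat.cast_sub hBadle]
  have htot' : (Nat.card (Matrix (Fin n) (Fin k) F) : ℝ) = (q:ℝ)^(n*k) := by
    rw [Nat.card_eq_fintype_card, htotM]; push_cast; rfl
  have hcast2 : ((q ^ (n*k) : ℕ) : ℝ) = (q:ℝ)^(n*k) := by push_cast; rfl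
  rw [hgood, htot', hcast2, sub_div, div_self (ne_of_gt (pow_pos hq0 (n*k)))]
  have hfrac : (#Bad : ℝ) / (q:ℝ)^(n*k) ≤ (2:ℝ) ^ (-((J:ℝ)*ε*(n:ℝ))) := by
    rw [div_le_iff₀ (pow_pos hq0 (n*k))]
    exact hBadfinal
  linarith [hfrac]
end
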